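/- Every homeomorphism f : X → X of a compact metric space X that has the pseudo-orbit tracing property and admits a positively expansive Borel probability measure has positive topological entropy. -/

import Mathlib

open MeasureTheory Filter Set ENNReal

/-- `Φ_δ(x) = {y : d(f^i x, f^i y) ≤ δ for all i ∈ ℕ}`. -/
def phiSet {X : Type*} [MetricSpace X] (f : X → X) (δ : ℝ) (x : X) : Set X :=
  {y | ∀ i : ℕ, dist (f^[i] x) (f^[i] y) ≤ δ}

/-- A Borel probability measure is positively expansive if there is an
expansivity constant `e > 0` with `μ (Φ_e x) = 0` for all `x`. -/
def IsPositivelyExpansive {X : Type*} [MetricSpace X] [MeasurableSpace X]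
    (f : X → X) (μ : Measure X) : Prop :=
  ∃ e : ℝ, 0 < e ∧ ∀ x : X, μ (phiSet f e x) = 0

/-- `M_f(n, ε)`: the minimal number of `ε`-balls in the metric
`(x, y) ↦ max_{0 ≤ i ≤ n} d(f^i x, f^i y)` needed to cover `X`. -/
noncomputable def coverNum {X : Type*} [MetricSpace X] (f : X → X) (n : ℕ) (ε : ℝ) : ℕ :=
  sInf {k : ℕ | ∃ S : Finset X, S.card = k ∧
    ∀ x : X, ∃ y ∈ S, ∀ i ≤ n, dist (f^[i] y) (f^[i] x) < ε}

/-- The topological entropy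
`h(f) = lim_{ε → 0} limsup_{n → ∞} (1/n) log M_f(n, ε)`; since the inner
`limsup` is monotone as `ε` decreases, the limit is the supremum over `ε > 0`. -/
noncomputable def topEntropy {X : Type*} [MetricSpace X] (f : X → X) : ℝ≥0∞ :=
  ⨆ (ε : ℝ) (_ : 0 < ε),
    Filter.atTop.limsup fun n : ℕ => ENNReal.ofReal (Real.log (coverNum f n ε) / n)

/-- The `i`-th iterate of a homeomorphism, `i ∈ ℤ`. -/
noncomputable def iterZ {X : Type*} [TopologicalSpace X] (f : X ≃ₜ X) (i : ℤ) (x : X) : X :=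
  if 0 ≤ i then (⇑f)^[i.toNat] x else (⇑f.symm)^[(-i).toNat] x

/-- The homeomorphism `f` has the pseudo-orbit tracing property: for all `ε > 0`
there is `δ > 0` such that every `δ`-pseudo-orbit is `ε`-shadowed. -/
def POTP {X : Type*} [MetricSpace X] (f : X ≃ₜ X) : Prop :=
  ∀ ε > (0 : ℝ), ∃ δ > (0 : ℝ), ∀ x : ℤ → X,
    (∀ i : ℤ, dist (f (x i)) (x (i + 1)) ≤ δ) →
    ∃ y : X, ∀ i : ℤ, dist (iterZ f i y) (x i) ≤ ε

private lemma iterZ_coe' {X : Type*} [TopologicalSpace X] (f : X ≃ₜ X) (n : ℕ) (z : X) :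
    iterZ f (n : ℤ) z = (⇑f)^[n] z := by
  simp [iterZ]

/-- The set of cardinalities of `(n, ε)`-covering families is nonempty. -/
private lemma coverSet_nonempty {X : Type*} [MetricSpace X] [CompactSpace X]
    (f : X → X) (hf : Continuous f) (n : ℕ) {ε : ℝ} (hε : 0 < ε) :
    {k : ℕ | ∃ S : Finset X, S.card = k ∧
      ∀ x : X, ∃ y ∈ S, ∀ i ≤ n, dist (f^[i] y) (f^[i] x) < ε}.Nonempty := by
  have hnhds : ∀ y ∈ (Set.univ : Set X),
      {x : X | ∀ i ≤ n, dist (f^[i] y) (f^[i] x) < ε} ∈ nhds y := by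
    intro y _
    have hopen : IsOpen {x : X | ∀ i ≤ n, dist (f^[i] y) (f^[i] x) < ε} := by
      have heq : {x : X | ∀ i ≤ n, dist (f^[i] y) (f^[i] x) < ε}
          = ⋂ i ∈ Finset.range (n+1), {x : X | dist (f^[i] y) (f^[i] x) < ε} := by
        ext x; simp [Nat.lt_succ_iff]
      rw [heq]
      exact isOpen_biInter_finset fun i _ =>
        isOpen_lt (continuous_const.dist (hf.iterate i)) continuous_const
    refine hopen.mem_nhds ?_
    intro i _
    simpa using hε
  obtain ⟨T, -, hT⟩ := isCompact_univ.elim_nhds_subcover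
      (fun y => {x : X | ∀ i ≤ n, dist (f^[i] y) (f^[i] x) < ε}) hnhds
  refine ⟨T.card, T, rfl, fun x => ?_⟩
  have hx := hT (Set.mem_univ x)
  simpa using hx

/-- The set of points whose orbit from time `k` on stays `e/2`-close to the
orbit of `w` from time `k` on is a null set. -/
private lemma null_tail {X : Type*} [MetricSpace X] [CompactSpace X] [MeasurableSpace X]
    (μ : Measure X) (f : X → X) (hf : Continuous f) {e : ℝ} (he : 0 < e)
    (h0 : ∀ x : X, μ (phiSet f e x) = 0) (w : X) (k : ℕ) :
    μ {y : X | ∀ n : ℕ, dist (f^[k+n] w) (f^[k+n] y) ≤ e/2} = 0 := by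
  set Q := {y : X | ∀ n : ℕ, dist (f^[k+n] w) (f^[k+n] y) ≤ e/2} with hQdef
  have hclosed : IsClosed Q := by
    have heq : Q = ⋂ n : ℕ, {y : X | dist (f^[k+n] w) (f^[k+n] y) ≤ e/2} := by
      ext z; simp [hQdef]
    rw [heq]
    exact isClosed_iInter fun n =>
      isClosed_le (continuous_const.dist (hf.iterate _)) continuous_const
  have hnhds : ∀ y ∈ Q,
      {y' : X | ∀ i ≤ k, dist (f^[i] y) (f^[i] y') < e/4} ∈ nhds y := by
    intro y _
    have hopen : IsOpen {y' : X | ∀ i ≤ k, dist (f^[i] y) (f^[i] y') < e/4} := by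
      have heq : {y' : X | ∀ i ≤ k, dist (f^[i] y) (f^[i] y') < e/4}
          = ⋂ i ∈ Finset.range (k+1), {y' : X | dist (f^[i] y) (f^[i] y') < e/4} := by
        ext z; simp [Nat.lt_succ_iff]
      rw [heq]
      exact isOpen_biInter_finset fun i _ =>
        isOpen_lt (continuous_const.dist (hf.iterate i)) continuous_const
    refine hopen.mem_nhds ?_
    intro i _
    simpa using by linarith
  obtain ⟨T, hTQ, hTcov⟩ := hclosed.isCompact.elim_nhds_subcover
      (fun y => {y' : X | ∀ i ≤ k, dist (f^[i] y) (f^[i] y') < e/4}) hnhds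
  · have hsub : ∀ y ∈ T, {y' : X | ∀ i ≤ k, dist (f^[i] y) (f^[i] y') < e/4} ∩ Q
        ⊆ phiSet f e y := by
      intro y hyT y' hy'
      obtain ⟨hU, hQ'⟩ := hy'
      have hyQ : y ∈ Q := hTQ y hyT
      intro i
      rcases le_or_gt i k with hik | hik
      · have := hU i hik
        linarith
      · obtain ⟨n, rfl⟩ : ∃ n, i = k + n := ⟨i - k, by omega⟩
        calc dist (f^[k+n] y) (f^[k+n] y')
            ≤ dist (f^[k+n] y) (f^[k+n] w) + dist (f^[k+n] w) (f^[k+n] y') :=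
              dist_triangle _ _ _
          _ ≤ e/2 + e/2 := add_le_add (by rw [dist_comm]; exact hyQ n) (hQ' n)
          _ = e := by ring
    have hle : μ Q ≤ ∑ y ∈ T,
        μ ({y' : X | ∀ i ≤ k, dist (f^[i] y) (f^[i] y') < e/4} ∩ Q) := by
      refine le_trans (measure_mono ?_) (measure_biUnion_finset_le T _)
      intro q hq
      obtain ⟨y, hyT, hy⟩ := Set.mem_iUnion₂.1 (hTcov hq)
      exact Set.mem_iUnion₂.2 ⟨y, hyT, hy, hq⟩
    have hzero : ∑ y ∈ T,
        μ ({y' : X | ∀ i ≤ k, dist (f^[i] y) (f^[i] y') < e/4} ∩ Q) = 0 :=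
      Finset.sum_eq_zero fun y hy => measure_mono_null (hsub y hy) (h0 y)
    rw [hzero] at hle
    exact le_antisymm hle zero_le
private lemma horseshoe_cover {X : Type*} [MetricSpace X] [CompactSpace X]
    (f : X ≃ₜ X) {e δP δ : ℝ} (he : 0 < e) (hδP : 0 < δP) (hδ : 0 < δ) (h8 : 8*δ ≤ δP)
    (hshadow : ∀ x : ℤ → X, (∀ i : ℤ, dist (f (x i)) (x (i + 1)) ≤ δP) →
      ∃ y : X, ∀ i : ℤ, dist (iterZ f i y) (x i) ≤ e/8)
    {x y : X} {t₁ t₂ Fa : ℕ} (h4a : t₁ < Fa) (h4b : Fa < t₂)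
    (h1 : dist ((⇑f)^[t₁] x) ((⇑f)^[t₁] y) ≤ 3*δ)
    (h2 : dist ((⇑f)^[t₂] x) ((⇑f)^[t₂] y) ≤ 3*δ)
    (h3 : dist ((⇑f)^[t₂] x) ((⇑f)^[t₁] x) ≤ 2*δ)
    (h5 : e/2 < dist ((⇑f)^[Fa] x) ((⇑f)^[Fa] y)) :
    ∀ k : ℕ, 2^k ≤ coverNum (⇑f) (k * (t₂ - t₁)) (e/8) := by
  set F' : X → X := ⇑f with hF'
  set P : ℕ := t₂ - t₁ with hPdef
  have hPpos : 0 < P := by omega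
  have hPz : (0:ℤ) < (P:ℤ) := by exact_mod_cast hPpos
  have hPne : ((P:ℤ)) ≠ 0 := hPz.ne'
  -- the seam estimate
  have hseam : ∀ b b' : Bool,
      dist (F'^[t₂] (cond b y x)) (F'^[t₁] (cond b' y x)) ≤ δP := by
    intro b b'
    cases b <;> cases b' <;> simp only [cond]
    · linarith
    · calc dist (F'^[t₂] x) (F'^[t₁] y)
          ≤ dist (F'^[t₂] x) (F'^[t₁] x) + dist (F'^[t₁] x) (F'^[t₁] y) :=
            dist_triangle _ _ _
        _ ≤ δP := by linarith
    · calc dist (F'^[t₂] y) (F'^[t₁] x)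
          ≤ dist (F'^[t₂] y) (F'^[t₂] x) + dist (F'^[t₂] x) (F'^[t₁] x) :=
            dist_triangle _ _ _
        _ ≤ δP := by rw [dist_comm (F'^[t₂] y)] ; linarith
    · calc dist (F'^[t₂] y) (F'^[t₁] y)
          ≤ dist (F'^[t₂] y) (F'^[t₂] x) + dist (F'^[t₂] x) (F'^[t₁] x)
              + dist (F'^[t₁] x) (F'^[t₁] y) := dist_triangle4 _ _ _ _
        _ ≤ δP := by rw [dist_comm (F'^[t₂] y)] ; linarith
  -- pseudo-orbit property for all binary words
  have hpseudo : ∀ ω : ℤ → Bool, ∀ i : ℤ,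
      dist (F' (F'^[t₁ + (i % (P:ℤ)).toNat] (cond (ω (i / (P:ℤ))) y x)))
        (F'^[t₁ + ((i+1) % (P:ℤ)).toNat] (cond (ω ((i+1) / (P:ℤ))) y x)) ≤ δP := by
    intro ω i
    have hr0 : 0 ≤ i % (P:ℤ) := Int.emod_nonneg i hPne
    have hrP : i % (P:ℤ) < (P:ℤ) := Int.emod_lt_of_pos i hPz
    have hid : (P:ℤ) * (i / (P:ℤ)) + i % (P:ℤ) = i := Int.mul_ediv_add_emod i (P:ℤ)
    rcases lt_or_eq_of_le (by omega : i % (P:ℤ) + 1 ≤ (P:ℤ)) with hlt | heq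
    · -- inner step
      have hi1 : i + 1 = (i % (P:ℤ) + 1) + (i / (P:ℤ)) * (P:ℤ) := by linarith
      have hm : (i+1) % (P:ℤ) = i % (P:ℤ) + 1 := by
        rw [hi1, Int.add_mul_emod_self_right]
        exact Int.emod_eq_of_lt (by omega) hlt
      have hd : (i+1) / (P:ℤ) = i / (P:ℤ) := by
        rw [hi1, Int.add_mul_ediv_right _ _ hPne,
          Int.ediv_eq_zero_of_lt (by omega) hlt, zero_add]
      rw [hm, hd]
      have htn : (i % (P:ℤ) + 1).toNat = (i % (P:ℤ)).toNat + 1 := by omega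
      rw [htn, ← Nat.add_assoc, Function.iterate_succ_apply' F']
      simp [hδP.le]
    · -- seam step
      have hi1 : i + 1 = 0 + (i / (P:ℤ) + 1) * (P:ℤ) := by linarith
      have hm : (i+1) % (P:ℤ) = 0 := by
        rw [hi1, Int.add_mul_emod_self_right]
        exact Int.zero_emod _
      have hd : (i+1) / (P:ℤ) = i / (P:ℤ) + 1 := by
        rw [hi1, Int.add_mul_ediv_right _ _ hPne, Int.zero_ediv, zero_add]
      rw [hm, hd]
      have hiter : F' (F'^[t₁ + (i % (P:ℤ)).toNat] (cond (ω (i / (P:ℤ))) y x))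
          = F'^[t₂] (cond (ω (i / (P:ℤ))) y x) := by
        rw [← Function.iterate_succ_apply' F']
        congr 1
        omega
      rw [hiter]
      simpa using hseam (ω (i / (P:ℤ))) (ω (i / (P:ℤ) + 1))
  -- now fix k
  intro k
  -- shadow points for all words
  have hex : ∀ w : Fin k → Bool, ∃ Y : X, ∀ i : ℤ,
      dist (iterZ f i Y)
        (F'^[t₁ + (i % (P:ℤ)).toNat]
          (cond (if h : 0 ≤ i / (P:ℤ) ∧ i / (P:ℤ) < (k:ℤ) then
              w ⟨(i / (P:ℤ)).toNat, by omega⟩ else false) y x)) ≤ e/8 := by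
    intro w
    exact hshadow _
      (hpseudo (fun q : ℤ => if h : 0 ≤ q ∧ q < (k:ℤ) then w ⟨q.toNat, by omega⟩ else false))
  choose Y hY using hex
  -- the covering number set
  have hcovne := coverSet_nonempty F' f.continuous (k*P) (by linarith : (0:ℝ) < e/8)
  have hmem := Nat.sInf_mem hcovne
  obtain ⟨S, hScard, hScov⟩ := hmem
  have hchoice : ∀ w : Fin k → Bool, ∃ c, c ∈ S ∧
      ∀ i ≤ k*P, dist (F'^[i] c) (F'^[i] (Y w)) < e/8 := fun w => hScov (Y w)
  choose g hgS hgd using hchoice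
  have hginj : Function.Injective g := by
    intro w w' hww'
    by_contra hne'
    obtain ⟨tt, htt⟩ := Function.ne_iff.1 hne'
    set i0 : ℕ := tt.val * P + (Fa - t₁) with hi0
    have hFP : Fa - t₁ < P := by omega
    have hi0n : i0 ≤ k * P := by
      have h1' : i0 < (tt.val + 1) * P := by
        rw [hi0]; nlinarith [tt.isLt]
      have h2' : (tt.val + 1) * P ≤ k * P := Nat.mul_le_mul_right P tt.isLt
      omega
    have hcast : ((i0:ℤ)) = ((Fa - t₁ : ℕ) : ℤ) + (tt.val : ℤ) * (P:ℤ) := by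
      push_cast [hi0]; ring
    have hmod : ((i0:ℤ)) % (P:ℤ) = ((Fa - t₁ : ℕ) : ℤ) := by
      rw [hcast, Int.add_mul_emod_self_right]
      exact Int.emod_eq_of_lt (by positivity) (by exact_mod_cast hFP)
    have hdiv : ((i0:ℤ)) / (P:ℤ) = (tt.val : ℤ) := by
      rw [hcast, Int.add_mul_ediv_right _ _ hPne,
        Int.ediv_eq_zero_of_lt (by positivity) (by exact_mod_cast hFP), zero_add]
    have hq : (0:ℤ) ≤ (tt.val : ℤ) ∧ (tt.val : ℤ) < (k:ℤ) :=
      ⟨by positivity, by exact_mod_cast tt.isLt⟩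
    have hpath : ∀ w'' : Fin k → Bool,
        F'^[t₁ + (((i0:ℤ)) % (P:ℤ)).toNat]
          (cond (if h : 0 ≤ (i0:ℤ) / (P:ℤ) ∧ (i0:ℤ) / (P:ℤ) < (k:ℤ) then
              w'' ⟨((i0:ℤ) / (P:ℤ)).toNat, by omega⟩ else false) y x)
          = F'^[Fa] (cond (w'' tt) y x) := by
      intro w''
      simp only [hmod, hdiv]
      rw [dif_pos hq]
      have hexp : t₁ + (((Fa - t₁ : ℕ) : ℤ)).toNat = Fa := by omega
      rw [hexp]
      have harg : (⟨((tt.val : ℤ)).toNat, by omega⟩ : Fin k) = tt := Fin.ext (by simp)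
      rw [harg]
    have hYw := hY w (i0 : ℤ)
    have hYw' := hY w' (i0 : ℤ)
    rw [iterZ_coe', hpath w] at hYw
    rw [iterZ_coe', hpath w'] at hYw'
    have hd : e/2 < dist (F'^[Fa] (cond (w tt) y x)) (F'^[Fa] (cond (w' tt) y x)) := by
      rcases Bool.eq_false_or_eq_true (w tt) with hw1 | hw1 <;>
        rcases Bool.eq_false_or_eq_true (w' tt) with hw2 | hw2
      · exact absurd (hw1.trans hw2.symm) htt
      · simp only [hw1, hw2, cond]
        rw [dist_comm]; exact h5
      · simp only [hw1, hw2, cond]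
        exact h5
      · exact absurd (hw1.trans hw2.symm) htt
    have hgw := hgd w i0 hi0n
    have hgw' := hgd w' i0 hi0n
    rw [hww'] at hgw
    have htri : dist (F'^[Fa] (cond (w tt) y x)) (F'^[Fa] (cond (w' tt) y x))
        ≤ dist (F'^[Fa] (cond (w tt) y x)) (F'^[i0] (Y w))
          + (dist (F'^[i0] (g w')) (F'^[i0] (Y w))
            + dist (F'^[i0] (g w')) (F'^[i0] (Y w')))
          + dist (F'^[i0] (Y w')) (F'^[Fa] (cond (w' tt) y x)) := by
      have t4 := dist_triangle4 (F'^[Fa] (cond (w tt) y x)) (F'^[i0] (Y w))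
        (F'^[i0] (Y w')) (F'^[Fa] (cond (w' tt) y x))
      have tm : dist (F'^[i0] (Y w)) (F'^[i0] (Y w'))
          ≤ dist (F'^[i0] (g w')) (F'^[i0] (Y w))
            + dist (F'^[i0] (g w')) (F'^[i0] (Y w')) := dist_triangle_left _ _ _
      linarith
    have hd1 : dist (F'^[Fa] (cond (w tt) y x)) (F'^[i0] (Y w)) ≤ e/8 := by
      rw [dist_comm]; exact hYw
    have hd2 : dist (F'^[i0] (Y w')) (F'^[Fa] (cond (w' tt) y x)) ≤ e/8 := hYw'
    linarith
  have hcard : Fintype.card (Fin k → Bool) ≤ Fintype.card {a // a ∈ S} :=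
    Fintype.card_le_of_injective (fun w => (⟨g w, hgS w⟩ : {a // a ∈ S}))
      (fun w w' h => hginj (congrArg Subtype.val h))
  have h2k : (2:ℕ)^k ≤ S.card := by
    simpa [Fintype.card_fun, Fintype.card_coe] using hcard
  calc (2:ℕ)^k ≤ S.card := h2k
    _ = coverNum F' (k*P) (e/8) := hScard
/-- Every homeomorphism of a compact metric space with the POTP admitting a
positively expansive Borel probability measure has positive topological
entropy. -/
theorem entropy_pos_of_potp_of_positivelyExpansive
    {X : Type*} [MetricSpace X] [CompactSpace X] [MeasurableSpace X] [BorelSpace X]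
    (f : X ≃ₜ X) (hPOTP : POTP f)
    (μ : Measure X) [IsProbabilityMeasure μ]
    (hμ : IsPositivelyExpansive (⇑f) μ) :
    0 < topEntropy (⇑f) := by
  obtain ⟨e, he, hΦ⟩ := hμ
  have hfc : Continuous (⇑f) := f.continuous
  -- POTP data at resolution e/8
  obtain ⟨δP, hδP, hshadow⟩ := hPOTP (e/8) (by linarith)
  set δ : ℝ := δP/8 with hδdef
  have hδ : 0 < δ := by positivity
  have h8 : 8*δ ≤ δP := by rw [hδdef]; linarith
  -- a finite δ-net
  obtain ⟨t, -, htcov⟩ := (isCompact_univ : IsCompact (Set.univ : Set X)).elim_nhds_subcover (fun y => Metric.ball y δ)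
      (fun z _ => Metric.ball_mem_nhds z hδ)
  set m : ℕ := t.card + 1 with hm
  -- a family of m points any two of which are e/2-separated at infinitely many times
  have hfam : ∀ M : ℕ, ∃ z : Fin M → X, ∀ i j : Fin M, i ≠ j → ∀ k : ℕ,
      ∃ n, k ≤ n ∧ e/2 < dist ((⇑f)^[n] (z i)) ((⇑f)^[n] (z j)) := by
    intro M
    induction M with
    | zero => exact ⟨Fin.elim0, fun i => i.elim0⟩
    | succ M ih =>
      obtain ⟨z, hz⟩ := ih
      have hbad : μ (⋃ (i : Fin M) (k : ℕ),
          {y : X | ∀ n : ℕ, dist ((⇑f)^[k+n] (z i)) ((⇑f)^[k+n] y) ≤ e/2}) = 0 :=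
        measure_iUnion_null fun i => measure_iUnion_null fun k =>
          null_tail μ (⇑f) hfc he hΦ (z i) k
      have hex : ∃ w : X, w ∉ ⋃ (i : Fin M) (k : ℕ),
          {y : X | ∀ n : ℕ, dist ((⇑f)^[k+n] (z i)) ((⇑f)^[k+n] y) ≤ e/2} := by
        by_contra hcon
        push_neg at hcon
        have hsub : (Set.univ : Set X) ⊆ ⋃ (i : Fin M) (k : ℕ),
            {y : X | ∀ n : ℕ, dist ((⇑f)^[k+n] (z i)) ((⇑f)^[k+n] y) ≤ e/2} :=
          fun w _ => hcon w
        have h1 : μ Set.univ = 0 := measure_mono_null hsub hbad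
        rw [measure_univ] at h1
        exact one_ne_zero h1
      obtain ⟨w, hw⟩ := hex
      have hwsep : ∀ (i : Fin M) (k : ℕ), ∃ n, k ≤ n ∧
          e/2 < dist ((⇑f)^[n] (z i)) ((⇑f)^[n] w) := by
        intro i k
        have hmem : w ∉ {y : X | ∀ n : ℕ,
            dist ((⇑f)^[k+n] (z i)) ((⇑f)^[k+n] y) ≤ e/2} := by
          intro hmem
          exact hw (Set.mem_iUnion.2 ⟨i, Set.mem_iUnion.2 ⟨k, hmem⟩⟩)
        simp only [Set.mem_setOf_eq, not_forall, not_le] at hmem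
        obtain ⟨n, hn⟩ := hmem
        exact ⟨k+n, Nat.le_add_right _ _, hn⟩
      refine ⟨Fin.snoc z w, ?_⟩
      intro i j hij k
      rcases Fin.eq_castSucc_or_eq_last i with ⟨i', rfl⟩ | rfl <;>
        rcases Fin.eq_castSucc_or_eq_last j with ⟨j', rfl⟩ | rfl
      · simp only [Fin.snoc_castSucc]
        exact hz i' j' (fun h => hij (by rw [h])) k
      · simp only [Fin.snoc_castSucc, Fin.snoc_last]
        exact hwsep i' k
      · simp only [Fin.snoc_castSucc, Fin.snoc_last]
        obtain ⟨n, hn1, hn2⟩ := hwsep j' k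
        exact ⟨n, hn1, by rwa [dist_comm]⟩
      · exact absurd rfl hij
  obtain ⟨z, hz⟩ := hfam m
  -- dichotomy: some pair gets 3δ-close at infinitely many times
  have hgood : ∃ i j : Fin m, i ≠ j ∧ ∀ k : ℕ, ∃ n, k ≤ n ∧
      dist ((⇑f)^[n] (z i)) ((⇑f)^[n] (z j)) ≤ 3*δ := by
    by_contra hcon
    push_neg at hcon
    have hKex : ∀ p : Fin m × Fin m, ∃ kk : ℕ, p.1 ≠ p.2 → ∀ n, kk ≤ n →
        3*δ < dist ((⇑f)^[n] (z p.1)) ((⇑f)^[n] (z p.2)) := by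
      intro p
      by_cases hp : p.1 = p.2
      · exact ⟨0, fun h => absurd hp h⟩
      · obtain ⟨kk, hkk⟩ := hcon p.1 p.2 hp
        refine ⟨kk, fun _ n hn => ?_⟩
        obtain h := hkk n hn
        exact h
    choose K hK using hKex
    set Km : ℕ := Finset.univ.sup K with hKm
    have hcell : ∀ i : Fin m, ∃ c, c ∈ t ∧ (⇑f)^[Km] (z i) ∈ Metric.ball c δ := by
      intro i
      have hmem := htcov (Set.mem_univ ((⇑f)^[Km] (z i)))
      simpa using hmem
    choose c hct hcb using hcell
    have hcard : Fintype.card {a // a ∈ t} < Fintype.card (Fin m) := by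
      simp [Fintype.card_coe, hm]
    obtain ⟨i, j, hij, hcij⟩ := Fintype.exists_ne_map_eq_of_card_lt
      (fun i : Fin m => (⟨c i, hct i⟩ : {a // a ∈ t})) hcard
    have hKle : K (i, j) ≤ Km := Finset.le_sup (Finset.mem_univ _)
    have hfar'' : 3*δ < dist ((⇑f)^[Km] (z i)) ((⇑f)^[Km] (z j)) := hK (i, j) hij Km hKle
    have hcc : c i = c j := congrArg Subtype.val hcij
    have hbi := hcb i
    have hbj := hcb j
    rw [Metric.mem_ball] at hbi hbj
    have h2' : dist ((⇑f)^[Km] (z i)) ((⇑f)^[Km] (z j))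
        ≤ dist ((⇑f)^[Km] (z i)) (c i) + dist ((⇑f)^[Km] (z j)) (c j) := by
      calc dist ((⇑f)^[Km] (z i)) ((⇑f)^[Km] (z j))
          ≤ dist ((⇑f)^[Km] (z i)) (c i) + dist (c i) ((⇑f)^[Km] (z j)) :=
            dist_triangle _ _ _
        _ = dist ((⇑f)^[Km] (z i)) (c i) + dist ((⇑f)^[Km] (z j)) (c j) := by
            rw [hcc, dist_comm (c j) ((⇑f)^[Km] (z j))]
    linarith
  obtain ⟨i0, j0, hij0, hclose⟩ := hgood
  have hfar : ∀ k : ℕ, ∃ n, k ≤ n ∧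
      e/2 < dist ((⇑f)^[n] (z i0)) ((⇑f)^[n] (z j0)) := hz i0 j0 hij0
  -- a recursively defined sequence of close times with far times in between
  let T := {p : ℕ × ℕ // dist ((⇑f)^[p.1] (z i0)) ((⇑f)^[p.1] (z j0)) ≤ 3*δ ∧
      p.1 < p.2 ∧ e/2 < dist ((⇑f)^[p.2] (z i0)) ((⇑f)^[p.2] (z j0))}
  let init : T := ⟨((hclose 0).choose, (hfar ((hclose 0).choose + 1)).choose),
    (hclose 0).choose_spec.2,
    Nat.lt_of_succ_le (hfar ((hclose 0).choose + 1)).choose_spec.1,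
    (hfar ((hclose 0).choose + 1)).choose_spec.2⟩
  let next : T → T := fun p =>
    ⟨((hclose (p.val.2+1)).choose,
      (hfar ((hclose (p.val.2+1)).choose + 1)).choose),
      (hclose (p.val.2+1)).choose_spec.2,
      Nat.lt_of_succ_le (hfar ((hclose (p.val.2+1)).choose + 1)).choose_spec.1,
      (hfar ((hclose (p.val.2+1)).choose + 1)).choose_spec.2⟩
  let v : ℕ → T := fun s => Nat.recAux init (fun _ p => next p) s
  have hv_succ : ∀ s, v (s+1) = next (v s) := fun _ => rfl
  have hlink : ∀ s, (v s).val.2 < (v (s+1)).val.1 := by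
    intro s
    rw [hv_succ]
    exact Nat.lt_of_succ_le (hclose ((v s).val.2+1)).choose_spec.1
  have humono : StrictMono (fun s => (v s).val.1) := by
    apply strictMono_nat_of_lt_succ
    intro s
    exact lt_trans (v s).property.2.1 (hlink s)
  -- pigeonhole over cells for the first-coordinate orbit at the close times
  have hcell : ∀ s : Fin m, ∃ c, c ∈ t ∧
      (⇑f)^[(v s.val).val.1] (z i0) ∈ Metric.ball c δ := by
    intro s
    have hmem := htcov (Set.mem_univ ((⇑f)^[(v s.val).val.1] (z i0)))
    simpa using hmem
  choose c hct hcb using hcell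
  have hcard : Fintype.card {a // a ∈ t} < Fintype.card (Fin m) := by
    simp [Fintype.card_coe, hm]
  obtain ⟨s, s', hss', hcss'⟩ := Fintype.exists_ne_map_eq_of_card_lt
    (fun s : Fin m => (⟨c s, hct s⟩ : {a // a ∈ t})) hcard
  -- extract the pair with a < b
  have hmain : ∃ a b : Fin m, a < b ∧ c a = c b := by
    rcases hss'.lt_or_gt with h | h
    · exact ⟨s, s', h, congrArg Subtype.val hcss'⟩
    · exact ⟨s', s, h, (congrArg Subtype.val hcss').symm⟩
  obtain ⟨a, b, hab, hcab⟩ := hmain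
  set t₁ : ℕ := (v a.val).val.1 with ht₁
  set t₂ : ℕ := (v b.val).val.1 with ht₂
  set Fa : ℕ := (v a.val).val.2 with hFa
  have h4a : t₁ < Fa := (v a.val).property.2.1
  have h4b : Fa < t₂ := by
    have h1' : Fa < (v (a.val+1)).val.1 := hlink a.val
    have hab' : a.val < b.val := hab
    have h2' : (v (a.val+1)).val.1 ≤ t₂ := by
      rcases Nat.lt_or_ge (a.val+1) b.val with hh | hh
      · exact le_of_lt (humono hh)
      · have heqv : a.val + 1 = b.val := le_antisymm hab' hh
        rw [ht₂]
        exact le_of_eq (by rw [← heqv])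
    omega
  have h1 : dist ((⇑f)^[t₁] (z i0)) ((⇑f)^[t₁] (z j0)) ≤ 3*δ := (v a.val).property.1
  have h2 : dist ((⇑f)^[t₂] (z i0)) ((⇑f)^[t₂] (z j0)) ≤ 3*δ := (v b.val).property.1
  have h5 : e/2 < dist ((⇑f)^[Fa] (z i0)) ((⇑f)^[Fa] (z j0)) := (v a.val).property.2.2
  have h3 : dist ((⇑f)^[t₂] (z i0)) ((⇑f)^[t₁] (z i0)) ≤ 2*δ := by
    have hba : dist ((⇑f)^[t₁] (z i0)) (c b) < δ := by
      have hmem := hcb a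
      rw [Metric.mem_ball, hcab] at hmem
      exact hmem
    have hbb : dist ((⇑f)^[t₂] (z i0)) (c b) < δ := by
      have hmem := hcb b
      rw [Metric.mem_ball] at hmem
      exact hmem
    calc dist ((⇑f)^[t₂] (z i0)) ((⇑f)^[t₁] (z i0))
        ≤ dist ((⇑f)^[t₂] (z i0)) (c b) + dist (c b) ((⇑f)^[t₁] (z i0)) :=
          dist_triangle _ _ _
      _ ≤ 2*δ := by
          rw [dist_comm (c b) ((⇑f)^[t₁] (z i0))]
          linarith
  -- the horseshoe estimate
  have hcount := horseshoe_cover f he hδP hδ h8 hshadow h4a h4b h1 h2 h3 h5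
  set P : ℕ := t₂ - t₁ with hP
  have hPpos : 0 < P := by omega
  -- conclude positive entropy
  have hεfin : (0:ℝ) < e/8 := by linarith
  set cc : ℝ≥0∞ := ENNReal.ofReal (Real.log 2 / P) with hcc
  have hcpos : 0 < cc := by
    rw [hcc, ENNReal.ofReal_pos]
    apply div_pos (Real.log_pos (by norm_num))
    exact_mod_cast hPpos
  have hfreq : ∃ᶠ n in atTop, cc ≤ ENNReal.ofReal (Real.log (coverNum (⇑f) n (e/8)) / n) := by
    rw [Filter.frequently_atTop]
    intro K
    refine ⟨(K+1)*P, ?_, ?_⟩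
    · calc K ≤ K + 1 := Nat.le_succ _
        _ ≤ (K+1)*P := Nat.le_mul_of_pos_right _ hPpos
    · rw [hcc]
      apply ENNReal.ofReal_le_ofReal
      have hcn : (2:ℝ)^(K+1) ≤ ((coverNum (⇑f) ((K+1)*P) (e/8) : ℕ) : ℝ) := by
        exact_mod_cast hcount (K+1)
      have hlog : ((K+1:ℕ):ℝ) * Real.log 2
          ≤ Real.log ((coverNum (⇑f) ((K+1)*P) (e/8) : ℕ) : ℝ) := by
        rw [← Real.log_pow]
        exact Real.log_le_log (by positivity) hcn
      have hn : (((K+1)*P : ℕ):ℝ) = ((K+1:ℕ):ℝ) * (P:ℝ) := by push_cast; ring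
      rw [hn]
      rw [div_le_div_iff₀ (by positivity) (by positivity)]
      calc Real.log 2 * (((K+1:ℕ):ℝ) * (P:ℝ))
          = (((K+1:ℕ):ℝ) * Real.log 2) * (P:ℝ) := by ring
        _ ≤ Real.log ((coverNum (⇑f) ((K+1)*P) (e/8) : ℕ) : ℝ) * (P:ℝ) := by
            apply mul_le_mul_of_nonneg_right hlog
            positivity
  have hlim : cc ≤ atTop.limsup
      (fun n : ℕ => ENNReal.ofReal (Real.log (coverNum (⇑f) n (e/8)) / n)) :=
    Filter.le_limsup_of_frequently_le hfreq
  have hsup : atTop.limsup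
      (fun n : ℕ => ENNReal.ofReal (Real.log (coverNum (⇑f) n (e/8)) / n))
      ≤ topEntropy (⇑f) :=
    le_iSup₂ (f := fun (ε : ℝ) (_ : 0 < ε) =>
      atTop.limsup fun n : ℕ => ENNReal.ofReal (Real.log (coverNum (⇑f) n ε) / n))
      (e/8) hεfin
  exact lt_of_lt_of_le hcpos (le_trans hlim hsup)
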